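/- Lemma (ancestor clue, trigger version): Let 𝓡 be a ruleset in which every rule body has at most b atoms, and let D be a derivation from a factbase F and 𝓡. Then for every trigger (R,π) of rank k in D, the number of ancestors of (R,π) that belong to F is at most b^k, i.e., |F ∩ Anc((R,π),D)| ≤ b^k. -/

import Mathlib

/-! # A framework for existential rules and the chase

Terms are constants, ordinary variables, or *nulls* (fresh existential variables).
The null `XTerm.null bodyEnc headEnc z key` is the fresh variable `z_{(R,π)}`
canonically determined by the trigger `(R,π)` (encoded by the rule's body and head
and by the restriction of `π` to the terms of the body) and by the existential
variable `z` of the head. -/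

inductive XTerm : Type
  | const : ℕ → XTerm
  | var : ℕ → XTerm
  | null : List (ℕ × List XTerm) → List (ℕ × List XTerm) → XTerm →
      List (XTerm × XTerm) → XTerm

/-- variables (including nulls) are the non-constant terms -/
def XTerm.isVar : XTerm → Prop
  | .const _ => False
  | _ => True

/-- an atom: a predicate together with its list of arguments -/
structure XAtom where
  pred : ℕ
  args : List XTerm

/-- an existential rule, given by its (finite) body and head -/
structure XRule where
  body : List XAtom
  head : List XAtom

/-- a trigger `(R,π)` -/
structure Trigger where
  rule : XRule
  π : XTerm → XTerm

def applyAtom (σ : XTerm → XTerm) (a : XAtom) : XAtom := ⟨a.pred, a.args.map σ⟩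

def applySet (σ : XTerm → XTerm) (S : Set XAtom) : Set XAtom := applyAtom σ '' S

/-- a substitution leaves constants unchanged -/
def constPreserving (σ : XTerm → XTerm) : Prop :=
  ∀ c, σ (XTerm.const c) = XTerm.const c

/-- `σ` is a homomorphism from the set of atoms `A` to the set of atoms `B` -/
def isHom (σ : XTerm → XTerm) (A B : Set XAtom) : Prop :=
  constPreserving σ ∧ applySet σ A ⊆ B

/-- the variables occurring in a finite set (list) of atoms -/
def listVars (l : List XAtom) : Set XTerm := {t | t.isVar ∧ ∃ a ∈ l, t ∈ a.args}

def XRule.bodySet (R : XRule) : Set XAtom := {a | a ∈ R.body}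
def XRule.headSet (R : XRule) : Set XAtom := {a | a ∈ R.head}

/-- the frontier of a rule: the variables shared by its body and head -/
def XRule.frontier (R : XRule) : Set XTerm := listVars R.body ∩ listVars R.head

/-- the existential variables of a rule: variables of the head not in the body -/
def XRule.existVars (R : XRule) : Set XTerm := listVars R.head \ listVars R.body

/-- canonical encoding of the relevant part of a trigger's substitution -/
def trigKey (R : XRule) (π : XTerm → XTerm) : List (XTerm × XTerm) :=
  (R.body.flatMap XAtom.args).map (fun t => (t, π t))

open Classical in
/-- the safe extension `π^s` of `π`: it maps each existential variable `z` of the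
head to the fresh variable `z_{(R,π)}` determined by the trigger, and is `π`
elsewhere -/
noncomputable def safeExt (R : XRule) (π : XTerm → XTerm) : XTerm → XTerm := fun t =>
  if t ∈ R.existVars then
    XTerm.null (R.body.map fun a => (a.pred, a.args))
      (R.head.map fun a => (a.pred, a.args)) t (trigKey R π)
  else π t

/-- two triggers are the same when they have the same rule and their substitutions
agree on the body (the domain of the substitution of a trigger) -/
def TrigEquiv (T T' : Trigger) : Prop :=
  T.rule = T'.rule ∧ ∀ t ∈ T.rule.body.flatMap XAtom.args, T.π t = T'.π t

/-- A (possibly infinite) derivation `D₀ = (∅,∅,F₀), D₁ = (R₁,π₁,F₁), …` from a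
factbase `F` and a ruleset `𝓡`:  `tr i` is the trigger of the element `Dᵢ`
(defined for `1 ≤ i ≤` length) and `facts i` is its factbase `Fᵢ`; each `Fᵢ`
(`i ≥ 1`) is the immediate derivation from `Fᵢ₋₁` through `(Rᵢ,πᵢ)`, and all the
triggers are pairwise distinct. -/
structure ChaseDerivation (𝓡 : Set XRule) (F : Set XAtom) where
  tr : ℕ → Option Trigger
  facts : ℕ → Set XAtom
  tr_zero : tr 0 = none
  facts_zero : facts 0 = F
  step_some : ∀ i T, tr (i+1) = some T →
    T.rule ∈ 𝓡 ∧ isHom T.π T.rule.bodySet (facts i) ∧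
    facts (i+1) = facts i ∪ applySet (safeExt T.rule T.π) T.rule.headSet
  step_none : ∀ i, tr (i+1) = none → facts (i+1) = facts i
  closed : ∀ i, tr (i+2) ≠ none → tr (i+1) ≠ none
  distinct : ∀ i j T T', tr i = some T → tr j = some T' → i ≠ j → ¬ TrigEquiv T T'

namespace Chase

variable {𝓡 : Set XRule} {F G : Set XAtom}

/-- the set of atoms produced by the `i`-th element of the derivation -/
noncomputable def producedAt (D : ChaseDerivation 𝓡 F) (i : ℕ) : Set XAtom :=
  match D.tr i with
  | some T => applySet (safeExt T.rule T.π) T.rule.headSet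
  | none => ∅

def listMax (l : List ℕ) : ℕ := l.foldr max 0

open Classical in
noncomputable def rankStep (D : ChaseDerivation 𝓡 F) (prev : XAtom → ℕ) (A : XAtom) : ℕ :=
  if A ∈ D.facts 0 then 0
  else if h : ∃ i, A ∈ producedAt D i then
    match D.tr (Nat.find h) with
    | some T => 1 + listMax ((T.rule.body.map (applyAtom T.π)).map prev)
    | none => 0
  else 0

noncomputable def rankFuel (D : ChaseDerivation 𝓡 F) : ℕ → XAtom → ℕ
  | 0 => fun _ => 0
  | n+1 => rankStep D (rankFuel D n)

open Classical in
/-- the index of the first trigger of the derivation producing a given atom -/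
noncomputable def firstProd (D : ChaseDerivation 𝓡 F) (A : XAtom) : ℕ :=
  if h : ∃ i, A ∈ producedAt D i then Nat.find h else 0

/-- the rank of an atom in a derivation: `0` for the atoms of `F₀`, and otherwise
`1 +` the maximal rank of the atoms of `π(B)`, where `(R,π)` (with `R = (B,H)`)
is the first trigger of the derivation such that `A ∈ π^s(H)` -/
noncomputable def rank (D : ChaseDerivation 𝓡 F) (A : XAtom) : ℕ :=
  rankFuel D (firstProd D A + 1) A

/-- the rank of a trigger `(R,π)`: `1 +` the maximal rank of the atoms of `π(B)` -/
noncomputable def trigRank (D : ChaseDerivation 𝓡 F) (T : Trigger) : ℕ :=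
  1 + listMax ((T.rule.body.map (applyAtom T.π)).map (rank D))

/-- all atoms appearing in a derivation -/
def allAtoms (D : ChaseDerivation 𝓡 F) : Set XAtom := ⋃ i, D.facts i

/-- the derivation has depth (maximal rank of an atom) at most `k` -/
def depthAtMost (D : ChaseDerivation 𝓡 F) (k : ℕ) : Prop :=
  ∀ A ∈ allAtoms D, rank D A ≤ k

/-- the derivation has depth at least `k` -/
def depthAtLeast (D : ChaseDerivation 𝓡 F) (k : ℕ) : Prop :=
  ∃ A ∈ allAtoms D, k ≤ rank D A

/-- O-applicability of a trigger on the subderivation `D₀,…,Dᵢ`: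
its substitution is a homomorphism from the body to `Fᵢ` -/
def AppO (D : ChaseDerivation 𝓡 F) (i : ℕ) (T : Trigger) : Prop :=
  T.rule ∈ 𝓡 ∧ isHom T.π T.rule.bodySet (D.facts i)

def frontierAgree (R : XRule) (π π' : XTerm → XTerm) : Prop :=
  ∀ t ∈ R.frontier, π t = π' t

/-- SO-applicability on `D₀,…,Dᵢ`: moreover no trigger of the subderivation has the
same rule with a substitution agreeing on the frontier -/
def AppSO (D : ChaseDerivation 𝓡 F) (i : ℕ) (T : Trigger) : Prop :=
  AppO D i T ∧ ∀ j T', j ≤ i → D.tr j = some T' →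
    ¬ (T'.rule = T.rule ∧ frontierAgree T.rule T.π T'.π)

/-- R-applicability on `D₀,…,Dᵢ`: moreover `π` cannot be extended to a homomorphism
from `B ∪ H` to `Fᵢ` -/
def AppR (D : ChaseDerivation 𝓡 F) (i : ℕ) (T : Trigger) : Prop :=
  AppO D i T ∧ ¬ ∃ σ : XTerm → XTerm,
    isHom σ (T.rule.bodySet ∪ T.rule.headSet) (D.facts i) ∧
    ∀ t ∈ listVars T.rule.body, σ t = T.π t

/-- logical equivalence of two sets of atoms: each maps to the other by homomorphism -/
def logEquiv (A B : Set XAtom) : Prop := (∃ σ, isHom σ A B) ∧ (∃ σ, isHom σ B A)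

/-- E-applicability on `D₀,…,Dᵢ`: moreover `Fᵢ ∪ π^s(H)` is not logically
equivalent to `Fᵢ` -/
def AppE (D : ChaseDerivation 𝓡 F) (i : ℕ) (T : Trigger) : Prop :=
  AppO D i T ∧
  ¬ logEquiv (D.facts i ∪ applySet (safeExt T.rule T.π) T.rule.headSet) (D.facts i)

/-- an O-chase derivation is any derivation -/
def OChase (_D : ChaseDerivation 𝓡 F) : Prop := True

/-- an SO-chase derivation: every trigger is SO-applicable on the preceding
subderivation -/
def SOChase (D : ChaseDerivation 𝓡 F) : Prop := ∀ i T, D.tr (i+1) = some T → AppSO D i T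

/-- an R-chase derivation: every trigger is R-applicable on the preceding
subderivation -/
def RChase (D : ChaseDerivation 𝓡 F) : Prop := ∀ i T, D.tr (i+1) = some T → AppR D i T

/-- rank compatibility: triggers appear in order of non-decreasing rank -/
def RankCompatible (D : ChaseDerivation 𝓡 F) : Prop :=
  ∀ i j T T', D.tr i = some T → D.tr j = some T' → i ≤ j →
    trigRank D T ≤ trigRank D T'

/-- rank exhaustiveness (w.r.t. an applicability criterion `App`): for every rank
`k` of a trigger of the derivation, if `Dᵢ` is the last element whose trigger has
rank `k` then every trigger `App`-applicable on `D₀,…,Dᵢ` has rank `k+1` -/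
def RankExhaustive (App : ChaseDerivation 𝓡 F → ℕ → Trigger → Prop)
    (D : ChaseDerivation 𝓡 F) : Prop :=
  ∀ i T, D.tr i = some T →
    (∀ j T', i < j → D.tr j = some T' → trigRank D T' ≠ trigRank D T) →
    ∀ T', App D i T' → trigRank D T' = trigRank D T + 1

/-- breadth-first derivation (w.r.t. an applicability criterion) -/
def BreadthFirst (App : ChaseDerivation 𝓡 F → ℕ → Trigger → Prop)
    (D : ChaseDerivation 𝓡 F) : Prop :=
  RankCompatible D ∧ RankExhaustive App D

/-- an E-chase derivation: an E-breadth-first derivation in which every trigger is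
E-applicable on the preceding subderivation -/
def EChase (D : ChaseDerivation 𝓡 F) : Prop :=
  BreadthFirst AppE D ∧ ∀ i T, D.tr (i+1) = some T → AppE D i T

/-- exhaustiveness: for every `i` and every trigger applicable on `D₀,…,Dᵢ` there is
`k ≥ i` such that either `D_k = (R,π,F_k)` or the trigger is not applicable on
`D₀,…,D_k` -/
def Exhaustive (App : ChaseDerivation 𝓡 F → ℕ → Trigger → Prop)
    (D : ChaseDerivation 𝓡 F) : Prop :=
  ∀ i T, App D i T →
    ∃ k, i ≤ k ∧ ((∃ T', D.tr k = some T' ∧ TrigEquiv T T') ∨ ¬ App D k T)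

/-- the derivation is finite -/
def IsFiniteDeriv (D : ChaseDerivation 𝓡 F) : Prop := ∃ n, ∀ m, n ≤ m → D.tr m = none

/-- a terminating derivation: exhaustive and finite -/
def Terminating (App : ChaseDerivation 𝓡 F → ℕ → Trigger → Prop)
    (D : ChaseDerivation 𝓡 F) : Prop :=
  Exhaustive App D ∧ IsFiniteDeriv D

/-- `D'` is a subderivation of `D`: its sequence of triggers is a subsequence of
that of `D` -/
def IsSubderivation (D' : ChaseDerivation 𝓡 G) (D : ChaseDerivation 𝓡 F) : Prop :=
  ∃ φ : ℕ → ℕ, StrictMono φ ∧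
    ∀ i T, D'.tr (i+1) = some T → ∃ T', D.tr (φ i + 1) = some T' ∧ TrigEquiv T T'

/-- `D'` is the restriction of `D` induced by `G`: the maximal derivation from `G`
and `𝓡` whose sequence of triggers is a subsequence of that of `D` -/
def IsRestriction (D : ChaseDerivation 𝓡 F) (G : Set XAtom) (D' : ChaseDerivation 𝓡 G) : Prop :=
  IsSubderivation D' D ∧
  ∀ D'' : ChaseDerivation 𝓡 G, IsSubderivation D'' D → IsSubderivation D'' D'

/-- `A'` is a direct ancestor of `A` in `D`: for some element `Dᵢ = (Rᵢ,πᵢ,Fᵢ)` of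
`D`, `A' ∈ πᵢ(Bᵢ)` and `A ∈ Fᵢ \ Fᵢ₋₁` -/
def DirectAnc (D : ChaseDerivation 𝓡 F) (A' A : XAtom) : Prop :=
  ∃ i T, D.tr (i+1) = some T ∧ A' ∈ applySet T.π T.rule.bodySet ∧
    A ∈ D.facts (i+1) ∧ A ∉ D.facts i

/-- the set of ancestors of an atom: the transitive closure of the direct-ancestor
relation -/
def Anc (D : ChaseDerivation 𝓡 F) (A : XAtom) : Set XAtom :=
  {A' | Relation.TransGen (DirectAnc D) A' A}

/-- the ancestors of a trigger `(R,π)`: the atoms of `π(B)` together with the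
ancestors of these atoms -/
def TrigAnc (D : ChaseDerivation 𝓡 F) (T : Trigger) : Set XAtom :=
  applySet T.π T.rule.bodySet ∪ ⋃ A ∈ applySet T.π T.rule.bodySet, Anc D A

end Chase

open Chase


section Aux

open Chase
open scoped Classical

variable {𝓡 : Set XRule} {F : Set XAtom}

lemma facts_succ (D : ChaseDerivation 𝓡 F) (i : ℕ) : D.facts i ⊆ D.facts (i+1) := by
  cases h : D.tr (i+1) with
  | none => rw [D.step_none i h]
  | some T => rw [(D.step_some i T h).2.2]; exact Set.subset_union_left

lemma facts_mono (D : ChaseDerivation 𝓡 F) {i j : ℕ} (hij : i ≤ j) :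
    D.facts i ⊆ D.facts j := by
  induction j with
  | zero => rw [Nat.le_zero.mp hij]
  | succ j ih =>
    rcases Nat.lt_or_ge i (j+1) with h | h
    · exact (ih (by omega)).trans (facts_succ D j)
    · have : i = j + 1 := by omega
      rw [this]

lemma producedAt_some (D : ChaseDerivation 𝓡 F) {i T} (h : D.tr i = some T) :
    producedAt D i = applySet (safeExt T.rule T.π) T.rule.headSet := by
  unfold producedAt; rw [h]

lemma producedAt_none (D : ChaseDerivation 𝓡 F) {i} (h : D.tr i = none) :
    producedAt D i = ∅ := by
  unfold producedAt; rw [h]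

lemma exists_tr_of_mem_produced (D : ChaseDerivation 𝓡 F) {i A} (h : A ∈ producedAt D i) :
    ∃ T, D.tr i = some T := by
  cases hT : D.tr i with
  | none => rw [producedAt_none D hT] at h; exact h.elim
  | some T => exact ⟨T, rfl⟩

lemma producedAt_subset (D : ChaseDerivation 𝓡 F) (i : ℕ) : producedAt D i ⊆ D.facts i := by
  cases i with
  | zero =>
    rw [producedAt_none D D.tr_zero]
    exact Set.empty_subset _
  | succ i =>
    cases h : D.tr (i+1) with
    | none => rw [producedAt_none D h]; exact Set.empty_subset _
    | some T =>
      rw [producedAt_some D h, (D.step_some i T h).2.2]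
      exact Set.subset_union_right

lemma mem_facts_cases (D : ChaseDerivation 𝓡 F) {i A} (h : A ∈ D.facts i) :
    A ∈ D.facts 0 ∨ ∃ l, l ≤ i ∧ A ∈ producedAt D l := by
  induction i with
  | zero => exact Or.inl h
  | succ i ih =>
    cases hT : D.tr (i+1) with
    | none =>
      rw [D.step_none i hT] at h
      rcases ih h with h | ⟨l, hl, hm⟩
      · exact Or.inl h
      · exact Or.inr ⟨l, by omega, hm⟩
    | some T =>
      rw [(D.step_some i T hT).2.2] at h
      rcases h with h | h
      · rcases ih h with h | ⟨l, hl, hm⟩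
        · exact Or.inl h
        · exact Or.inr ⟨l, by omega, hm⟩
      · exact Or.inr ⟨i+1, le_refl _, by rw [producedAt_some D hT]; exact h⟩

lemma rankStep_eq (D : ChaseDerivation 𝓡 F) (prev : XAtom → ℕ) {A : XAtom}
    (hA : A ∉ D.facts 0) (hprod : ∃ i, A ∈ producedAt D i) {T}
    (hT : D.tr (Nat.find hprod) = some T) :
    rankStep D prev A = 1 + listMax ((T.rule.body.map (applyAtom T.π)).map prev) := by
  simp only [rankStep, if_neg hA, dif_pos hprod, hT]

lemma rankStep_zero_mem (D : ChaseDerivation 𝓡 F) (prev : XAtom → ℕ) {A : XAtom}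
    (hA : A ∈ D.facts 0) : rankStep D prev A = 0 := by
  simp only [rankStep, if_pos hA]

lemma rankStep_not_prod (D : ChaseDerivation 𝓡 F) (prev : XAtom → ℕ) {A : XAtom}
    (hA : A ∉ D.facts 0) (hprod : ¬ ∃ i, A ∈ producedAt D i) : rankStep D prev A = 0 := by
  simp only [rankStep, if_neg hA, dif_neg hprod]

lemma rankFuel_zero_mem (D : ChaseDerivation 𝓡 F) {A : XAtom} (h : A ∈ D.facts 0) (n : ℕ) :
    rankFuel D n A = 0 := by
  cases n with
  | zero => rfl
  | succ n => exact rankStep_zero_mem D _ h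

lemma rank_zero_mem (D : ChaseDerivation 𝓡 F) {A : XAtom} (h : A ∈ D.facts 0) :
    rank D A = 0 := rankFuel_zero_mem D h _

lemma rank_not_prod (D : ChaseDerivation 𝓡 F) {A : XAtom} (h0 : A ∉ D.facts 0)
    (hp : ¬ ∃ i, A ∈ producedAt D i) : rank D A = 0 := by
  show rankFuel D (firstProd D A + 1) A = 0
  show rankStep D (rankFuel D (firstProd D A)) A = 0
  exact rankStep_not_prod D _ h0 hp

lemma le_listMax {l : List ℕ} {x : ℕ} (h : x ∈ l) : x ≤ listMax l := by
  induction l with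
  | nil => cases h
  | cons a l ih =>
    rcases List.mem_cons.mp h with rfl | h
    · exact le_max_left _ _
    · exact le_trans (ih h) (le_max_right _ _)

lemma find_ne_zero (D : ChaseDerivation 𝓡 F) {A : XAtom} (hp : ∃ i, A ∈ producedAt D i) :
    Nat.find hp ≠ 0 := by
  intro h
  have hs := Nat.find_spec hp
  rw [h, producedAt_none D D.tr_zero] at hs
  exact hs

lemma rankFuel_stable (D : ChaseDerivation 𝓡 F) :
    ∀ n A, firstProd D A + 1 ≤ n → rankFuel D n A = rank D A := by
  intro n
  induction n using Nat.strong_induction_on with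
  | _ n IH =>
  intro A hn
  obtain ⟨m, rfl⟩ : ∃ m, n = m + 1 := ⟨n - 1, by omega⟩
  by_cases h0 : A ∈ D.facts 0
  · rw [rankFuel_zero_mem D h0, rank_zero_mem D h0]
  · by_cases hp : ∃ i, A ∈ producedAt D i
    · have hfp : firstProd D A = Nat.find hp := by rw [firstProd, dif_pos hp]
      obtain ⟨T, hT⟩ := exists_tr_of_mem_produced D (Nat.find_spec hp)
      obtain ⟨i', hji⟩ : ∃ i', Nat.find hp = i' + 1 :=
        ⟨Nat.find hp - 1, by have := find_ne_zero D hp; omega⟩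
      have hjm : i' + 1 ≤ m := by omega
      have hT' : D.tr (i' + 1) = some T := by rw [← hji]; exact hT
      have hbody : applySet T.π T.rule.bodySet ⊆ D.facts i' :=
        (D.step_some i' T hT').2.1.2
      have hmem : ∀ A' ∈ T.rule.body.map (applyAtom T.π), A' ∈ D.facts i' := by
        intro A' hA'
        apply hbody
        obtain ⟨a, ha, rfl⟩ := List.mem_map.mp hA'
        exact ⟨a, ha, rfl⟩
      have key : ∀ f, i' + 1 ≤ f → f < m + 1 →
          ∀ A' ∈ T.rule.body.map (applyAtom T.π), rankFuel D f A' = rank D A' := by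
        intro f hf1 hf2 A' hA'
        by_cases h0' : A' ∈ D.facts 0
        · rw [rankFuel_zero_mem D h0', rank_zero_mem D h0']
        · obtain ⟨l, hl, hpl⟩ := (mem_facts_cases D (hmem A' hA')).resolve_left h0'
          have hp' : ∃ i, A' ∈ producedAt D i := ⟨l, hpl⟩
          have hfp' : firstProd D A' ≤ l := by
            rw [firstProd, dif_pos hp']; exact Nat.find_le hpl
          exact IH f hf2 A' (by omega)
      have e1 : rankFuel D (m+1) A =
          1 + listMax ((T.rule.body.map (applyAtom T.π)).map (rankFuel D m)) :=
        rankStep_eq D _ h0 hp hT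
      have e2 : rank D A =
          1 + listMax ((T.rule.body.map (applyAtom T.π)).map (rankFuel D (Nat.find hp))) := by
        show rankFuel D (firstProd D A + 1) A = _
        rw [hfp, hji]
        exact rankStep_eq D _ h0 hp (by rw [hji]; exact hT')
      rw [e1, e2, hji]
      congr 1
      congr 1
      rw [List.map_congr_left (key m hjm (by omega)),
          List.map_congr_left (key (i'+1) le_rfl (by omega))]
    · rw [rank_not_prod D h0 hp]
      exact rankStep_not_prod D _ h0 hp

lemma rank_eq (D : ChaseDerivation 𝓡 F) {A : XAtom} (h0 : A ∉ D.facts 0)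
    (hp : ∃ i, A ∈ producedAt D i) {T} (hT : D.tr (Nat.find hp) = some T) :
    rank D A = 1 + listMax ((T.rule.body.map (applyAtom T.π)).map (rank D)) := by
  have hfp : firstProd D A = Nat.find hp := by rw [firstProd, dif_pos hp]
  obtain ⟨i', hji⟩ : ∃ i', Nat.find hp = i' + 1 :=
    ⟨Nat.find hp - 1, by have := find_ne_zero D hp; omega⟩
  have hT' : D.tr (i' + 1) = some T := by rw [← hji]; exact hT
  have hbody : applySet T.π T.rule.bodySet ⊆ D.facts i' := (D.step_some i' T hT').2.1.2
  have e2 : rank D A =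
      1 + listMax ((T.rule.body.map (applyAtom T.π)).map (rankFuel D (Nat.find hp))) := by
    show rankFuel D (firstProd D A + 1) A = _
    rw [hfp, hji]
    exact rankStep_eq D _ h0 hp (by rw [hji]; exact hT')
  rw [e2]
  congr 1
  congr 1
  apply List.map_congr_left
  intro A' hA'
  have hmemF : A' ∈ D.facts i' := by
    apply hbody
    obtain ⟨a, ha, rfl⟩ := List.mem_map.mp hA'
    exact ⟨a, ha, rfl⟩
  by_cases h0' : A' ∈ D.facts 0
  · rw [rankFuel_zero_mem D h0', rank_zero_mem D h0']
  · obtain ⟨l, hl, hpl⟩ := (mem_facts_cases D hmemF).resolve_left h0'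
    have hp' : ∃ i, A' ∈ producedAt D i := ⟨l, hpl⟩
    have hfp' : firstProd D A' ≤ l := by
      rw [firstProd, dif_pos hp']; exact Nat.find_le hpl
    exact rankFuel_stable D _ A' (by omega)

lemma directAnc_first (D : ChaseDerivation 𝓡 F) {A' A : XAtom} (h : DirectAnc D A' A) :
    ∃ hp : ∃ i, A ∈ producedAt D i, ∀ T, D.tr (Nat.find hp) = some T →
      A' ∈ applySet T.π T.rule.bodySet := by
  obtain ⟨i, T, hT, hA', hA1, hA0⟩ := h
  have hprod : A ∈ producedAt D (i+1) := by
    rw [producedAt_some D hT]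
    rw [(D.step_some i T hT).2.2] at hA1
    rcases hA1 with h | h
    · exact absurd h hA0
    · exact h
  have hp : ∃ i, A ∈ producedAt D i := ⟨i+1, hprod⟩
  refine ⟨hp, ?_⟩
  have hfind : Nat.find hp = i + 1 := by
    refine le_antisymm (Nat.find_le hprod) ?_
    by_contra hlt
    push_neg at hlt
    have hmem := producedAt_subset D _ (Nat.find_spec hp)
    exact hA0 (facts_mono D (by omega) hmem)
  intro T' hT'
  rw [hfind, hT] at hT'
  cases hT'
  exact hA'

lemma anc_zero (D : ChaseDerivation 𝓡 F) {A : XAtom} (h : A ∈ D.facts 0) :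
    Anc D A = ∅ := by
  have hno : ∀ A', ¬ DirectAnc D A' A := by
    rintro A' ⟨i, T, hT, _, _, hA0⟩
    exact hA0 (facts_mono D (Nat.zero_le i) h)
  ext x
  simp only [Anc, Set.mem_setOf_eq, Set.mem_empty_iff_false, iff_false]
  intro htg
  cases htg with
  | single h' => exact hno _ h'
  | tail _ h' => exact hno _ h'

lemma anc_not_prod (D : ChaseDerivation 𝓡 F) {A : XAtom}
    (hp : ¬ ∃ i, A ∈ producedAt D i) : Anc D A = ∅ := by
  have hno : ∀ A', ¬ DirectAnc D A' A := by
    intro A' h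
    obtain ⟨hp', _⟩ := directAnc_first D h
    exact hp hp'
  ext x
  simp only [Anc, Set.mem_setOf_eq, Set.mem_empty_iff_false, iff_false]
  intro htg
  cases htg with
  | single h' => exact hno _ h'
  | tail _ h' => exact hno _ h'

lemma anc_subset (D : ChaseDerivation 𝓡 F) {A : XAtom}
    (hp : ∃ i, A ∈ producedAt D i) {T} (hT : D.tr (Nat.find hp) = some T) :
    Anc D A ⊆ ⋃ A' ∈ applySet T.π T.rule.bodySet, insert A' (Anc D A') := by
  intro x hx
  have hx' : Relation.TransGen (DirectAnc D) x A := hx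
  cases hx' with
  | single h =>
    obtain ⟨hp', hmem⟩ := directAnc_first D h
    exact Set.mem_biUnion (hmem T hT) (Set.mem_insert x _)
  | tail htg h =>
    obtain ⟨hp', hmem⟩ := directAnc_first D h
    exact Set.mem_biUnion (hmem T hT) (Set.mem_insert_of_mem _ htg)

lemma applySet_body (σ : XTerm → XTerm) (R : XRule) :
    applySet σ R.bodySet = {a | a ∈ R.body.map (applyAtom σ)} := by
  ext a
  simp only [applySet, XRule.bodySet, Set.mem_image, Set.mem_setOf_eq, List.mem_map]

lemma count_biUnion (hF : F.Finite) (S : XAtom → Set XAtom) (c : ℕ) :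
    ∀ l : List XAtom, (∀ A' ∈ l, (F ∩ S A').ncard ≤ c) →
    (F ∩ ⋃ A' ∈ {a | a ∈ l}, S A').ncard ≤ l.length * c := by
  intro l
  induction l with
  | nil =>
    intro _
    simp
  | cons a l ih =>
    intro hc
    have hset : {x : XAtom | x ∈ a :: l} = insert a {x | x ∈ l} := by
      ext x; simp
    rw [hset, Set.biUnion_insert, Set.inter_union_distrib_left]
    calc (F ∩ S a ∪ F ∩ ⋃ A' ∈ {x | x ∈ l}, S A').ncard
        ≤ (F ∩ S a).ncard + (F ∩ ⋃ A' ∈ {x | x ∈ l}, S A').ncard :=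
          Set.ncard_union_le _ _
      _ ≤ c + l.length * c := add_le_add (hc a (List.mem_cons_self))
          (ih fun A' hA' => hc A' (List.mem_cons_of_mem _ hA'))
      _ = (a :: l).length * c := by simp [List.length_cons]; ring

lemma ancestor_clue_atoms (b : ℕ) {𝓡 : Set XRule} (hb : ∀ R ∈ 𝓡, R.body.length ≤ b)
    {F : Set XAtom} (hF : F.Finite) (D : ChaseDerivation 𝓡 F) :
    ∀ n A, firstProd D A ≤ n → (F ∩ insert A (Anc D A)).ncard ≤ b ^ rank D A := by
  intro n
  induction n using Nat.strong_induction_on with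
  | _ n IH =>
  intro A hn
  by_cases h0 : A ∈ D.facts 0
  · rw [rank_zero_mem D h0, anc_zero D h0, pow_zero]
    have hsub : F ∩ insert A (∅ : Set XAtom) ⊆ {A} := by
      intro x hx
      simpa using hx.2
    calc (F ∩ insert A (∅ : Set XAtom)).ncard ≤ ({A} : Set XAtom).ncard :=
          Set.ncard_le_ncard hsub (Set.finite_singleton A)
      _ = 1 := Set.ncard_singleton A
  · by_cases hp : ∃ i, A ∈ producedAt D i
    · obtain ⟨T, hT⟩ := exists_tr_of_mem_produced D (Nat.find_spec hp)
      obtain ⟨i', hji⟩ : ∃ i', Nat.find hp = i' + 1 :=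
        ⟨Nat.find hp - 1, by have := find_ne_zero D hp; omega⟩
      have hfp : firstProd D A = i' + 1 := by rw [firstProd, dif_pos hp, hji]
      have hT' : D.tr (i' + 1) = some T := by rw [← hji]; exact hT
      have hrule : T.rule ∈ 𝓡 := (D.step_some i' T hT').1
      have hbody : applySet T.π T.rule.bodySet ⊆ D.facts i' := (D.step_some i' T hT').2.1.2
      have hrank : rank D A =
          1 + listMax ((T.rule.body.map (applyAtom T.π)).map (rank D)) :=
        rank_eq D h0 hp hT
      set L := T.rule.body.map (applyAtom T.π) with hL
      set m := listMax (L.map (rank D)) with hm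
      have hlen : L.length ≤ b := by
        rw [hL, List.length_map]; exact hb T.rule hrule
      have hper : ∀ A' ∈ L, (F ∩ insert A' (Anc D A')).ncard ≤ b ^ m := by
        intro A' hA'
        have hble : 1 ≤ b := by
          have h1 : 0 < L.length := List.length_pos_iff.mpr (List.ne_nil_of_mem hA')
          omega
        have hrk : rank D A' ≤ m := le_listMax (List.mem_map_of_mem hA')
        have hmono : b ^ rank D A' ≤ b ^ m := Nat.pow_le_pow_right hble hrk
        have hmemF : A' ∈ D.facts i' := by
          apply hbody
          rw [applySet_body]
          exact hA'
        by_cases h0' : A' ∈ D.facts 0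
        · rw [anc_zero D h0']
          have hsub : F ∩ insert A' (∅ : Set XAtom) ⊆ {A'} := by
            intro x hx
            simpa using hx.2
          calc (F ∩ insert A' (∅ : Set XAtom)).ncard ≤ ({A'} : Set XAtom).ncard :=
                Set.ncard_le_ncard hsub (Set.finite_singleton A')
            _ = 1 := Set.ncard_singleton A'
            _ ≤ b ^ m := Nat.one_le_pow _ _ (by omega)
        · obtain ⟨l, hl, hpl⟩ := (mem_facts_cases D hmemF).resolve_left h0'
          have hp' : ∃ i, A' ∈ producedAt D i := ⟨l, hpl⟩
          have hfp' : firstProd D A' ≤ l := by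
            rw [firstProd, dif_pos hp']
            exact Nat.find_le hpl
          have hlt : firstProd D A' < n := by omega
          exact le_trans (IH (firstProd D A') hlt A' le_rfl) hmono
      have hanc := anc_subset D hp hT
      have hsub : F ∩ insert A (Anc D A) ⊆
          F ∩ ⋃ A' ∈ {a | a ∈ L}, insert A' (Anc D A') := by
        rw [hL, ← applySet_body]
        rintro x ⟨hxF, hx⟩
        refine ⟨hxF, ?_⟩
        rcases Set.mem_insert_iff.mp hx with rfl | hx
        · rw [D.facts_zero] at h0
          exact absurd hxF h0
        · exact hanc hx
      calc (F ∩ insert A (Anc D A)).ncard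
          ≤ (F ∩ ⋃ A' ∈ {a | a ∈ L}, insert A' (Anc D A')).ncard :=
            Set.ncard_le_ncard hsub (hF.subset Set.inter_subset_left)
        _ ≤ L.length * b ^ m := count_biUnion hF _ _ L hper
        _ ≤ b * b ^ m := Nat.mul_le_mul_right _ hlen
        _ = b ^ (1 + m) := by rw [pow_add, pow_one]
        _ = b ^ rank D A := by rw [hrank]
    · rw [anc_not_prod D hp]
      have hempty : F ∩ insert A (∅ : Set XAtom) = ∅ := by
        ext x
        simp only [Set.mem_inter_iff, Set.mem_insert_iff, Set.mem_empty_iff_false, or_false,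
          iff_false, not_and]
        rintro hxF rfl
        rw [D.facts_zero] at h0
        exact h0 hxF
      rw [hempty]
      simp

end Aux

/-- the ancestor clue, trigger version.  If every rule body of `𝓡` has
at most `b` atoms and `D` is a derivation from a factbase `F` and `𝓡`, then for
every trigger `(R,π)` of rank `k` in `D`, `|F ∩ Anc((R,π),D)| ≤ b^k`. -/
theorem ancestor_clue_triggers (b : ℕ) (𝓡 : Set XRule) (hb : ∀ R ∈ 𝓡, R.body.length ≤ b)
    (F : Set XAtom) (hF : F.Finite) (D : ChaseDerivation 𝓡 F)
    (T : Trigger) (hT : ∃ i, D.tr i = some T) (k : ℕ) (hk : trigRank D T = k) :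
    (F ∩ TrigAnc D T).ncard ≤ b ^ k := by
  obtain ⟨i, hTi⟩ := hT
  obtain ⟨i', rfl⟩ : ∃ i', i = i' + 1 := by
    cases i with
    | zero => rw [D.tr_zero] at hTi; cases hTi
    | succ i => exact ⟨i, rfl⟩
  have hrule : T.rule ∈ 𝓡 := (D.step_some i' T hTi).1
  set L := T.rule.body.map (applyAtom T.π) with hL
  set m := listMax (L.map (rank D)) with hm
  have hlen : L.length ≤ b := by
    rw [hL, List.length_map]; exact hb T.rule hrule
  have htrig : TrigAnc D T = ⋃ A' ∈ applySet T.π T.rule.bodySet, insert A' (Anc D A') := by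
    unfold TrigAnc
    ext x
    simp only [Set.mem_union, Set.mem_iUnion, Set.mem_insert_iff, exists_prop]
    constructor
    · rintro (hx | ⟨A', hA', hx⟩)
      · exact ⟨x, hx, Or.inl rfl⟩
      · exact ⟨A', hA', Or.inr hx⟩
    · rintro ⟨A', hA', rfl | hx⟩
      · exact Or.inl hA'
      · exact Or.inr ⟨A', hA', hx⟩
  have hper : ∀ A' ∈ L, (F ∩ insert A' (Anc D A')).ncard ≤ b ^ m := by
    intro A' hA'
    have hble : 1 ≤ b := by
      have h1 : 0 < L.length := List.length_pos_iff.mpr (List.ne_nil_of_mem hA')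
      omega
    have hrk : rank D A' ≤ m := le_listMax (List.mem_map_of_mem hA')
    exact le_trans (ancestor_clue_atoms b hb hF D (firstProd D A') A' le_rfl)
      (Nat.pow_le_pow_right hble hrk)
  have hkeq : k = 1 + m := by rw [← hk]; rfl
  calc (F ∩ TrigAnc D T).ncard
      = (F ∩ ⋃ A' ∈ {a | a ∈ L}, insert A' (Anc D A')).ncard := by
        rw [htrig, hL, ← applySet_body]
    _ ≤ L.length * b ^ m := count_biUnion hF _ _ L hper
    _ ≤ b * b ^ m := Nat.mul_le_mul_right _ hlen
    _ = b ^ (1 + m) := by rw [pow_add, pow_one]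
    _ = b ^ k := by rw [hkeq]
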